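/- For every N ∈ ℕ, every m ∈ ℕ, all a, b ∈ ℕ and all tuples c, d : Fin m → ℕ, composing with D_N(a,b) on the right satisfies the mirror normal-ordering recursion: V_N(c|d) ∘ D_N(a,b) = V_N(snoc c a | snoc d b) + ∑_{i : Fin m} δ_{a, d i} · V_N(c | update d i b), where snoc c a : Fin (m+1) → ℕ appends a to the tuple c, update d i b replaces the i-th entry of d by b, and δ_{x,y} = 1 if x = y and 0 otherwise. -/

import Mathlib

open MvPolynomial

noncomputable abbrev R : Type := MvPolynomial (ℕ × ℕ) ℂ

/-- The `gl(∞)` generator `D_N(a,b) p = ∑_{e<N} X_{(a,e)} ∂p/∂X_{(b,e)}`. -/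
noncomputable def Dop (N a b : ℕ) : R →ₗ[ℂ] R :=
  ∑ e ∈ Finset.range N,
    (LinearMap.mulLeft ℂ (X (a, e))) ∘ₗ (pderiv ((b, e) : ℕ × ℕ)).toLinearMap

/-- The normally ordered operator `V_N(a|b)`. -/
noncomputable def Vop (N : ℕ) {m : ℕ} (a b : Fin m → ℕ) : R →ₗ[ℂ] R :=
  ∑ e : Fin m → Fin N,
    (LinearMap.mulLeft ℂ (∏ i, X (a i, (e i : ℕ)))) ∘ₗ
      (List.ofFn fun i => (pderiv ((b i, (e i : ℕ)) : ℕ × ℕ)).toLinearMap).prod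

/-- The cut-and-join operator `W_N(σ) = ∑_a V_N(a | a∘σ)`. -/
noncomputable def Wop (N : ℕ) {m : ℕ} (σ : Equiv.Perm (Fin m)) : R →ₗ[ℂ] R :=
  ∑ a : Fin m → Fin N, Vop N (fun i => (a i : ℕ)) (fun i => (a (σ i) : ℕ))

/-- Compatibility of index tuples with a two-fold graph. -/
def Compatible {N m : ℕ} (α β : Fin m → ℕ) (a b : Fin m → Fin N) : Prop :=
  (∀ i j, a i = a j ↔ α i = α j) ∧ (∀ i j, b i = b j ↔ β i = β j)

instance {N m : ℕ} (α β : Fin m → ℕ) (a b : Fin m → Fin N) :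
    Decidable (Compatible α β a b) :=
  inferInstanceAs (Decidable (_ ∧ _))

/-- The unnormalized graph operator `Ṽ_N(α,β)`. -/
noncomputable def Vt (N : ℕ) {m : ℕ} (α β : Fin m → ℕ) : R →ₗ[ℂ] R :=
  ∑ p ∈ Finset.univ.filter
      (fun p : (Fin m → Fin N) × (Fin m → Fin N) => Compatible α β p.1 p.2),
    Vop N (fun i => (p.1 i : ℕ)) (fun i => (p.2 i : ℕ))

section Aux
variable {A : Type*} [Ring A] [Algebra ℂ A]

omit [Ring A] [Algebra ℂ A] in
lemma myupd_succ {n : ℕ} (D : Fin (n+1) → A) (j : Fin n) (x : A) :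
    (fun k : Fin n => Function.update D j.succ x k.succ)
      = Function.update (fun k : Fin n => D k.succ) j x := by
  funext k
  simp [Function.update_apply, Fin.succ_inj]

lemma prod_ofFn_mul {m : ℕ} (D : Fin m → A) (M : A) (γ : Fin m → ℂ)
    (h : ∀ j, D j * M = M * D j + γ j • 1) :
    (List.ofFn D).prod * M =
      M * (List.ofFn D).prod
        + ∑ i, γ i • (List.ofFn (Function.update D i 1)).prod := by
  induction m with
  | zero => simp
  | succ n ih =>
    have hT := ih (fun j => D j.succ) (fun j => γ j.succ) (fun j => h j.succ)
    rw [List.ofFn_succ, List.prod_cons, mul_assoc, hT, mul_add, ← mul_assoc, h 0,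
      add_mul, Fin.sum_univ_succ]
    have h0 : List.ofFn (Function.update D 0 (1:A)) = 1 :: List.ofFn (fun j : Fin n => D j.succ) := by
      rw [List.ofFn_succ]
      simp [Function.update_apply, Fin.succ_ne_zero]
    have hs : ∀ j : Fin n, List.ofFn (Function.update D j.succ (1:A))
        = D 0 :: List.ofFn (Function.update (fun k : Fin n => D k.succ) j 1) := by
      intro j
      rw [List.ofFn_succ, myupd_succ]
      simp [Function.update_apply, (Fin.succ_ne_zero j).symm]
    rw [h0]
    simp only [hs, List.prod_cons, mul_assoc, Finset.mul_sum, mul_smul_comm, smul_mul_assoc,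
      one_mul]
    abel

lemma prod_ofFn_update_mul {m : ℕ} (D : Fin m → A) (B : A)
    (hB : ∀ j, Commute B (D j)) (i : Fin m) :
    (List.ofFn (Function.update D i 1)).prod * B
      = (List.ofFn (Function.update D i B)).prod := by
  induction m with
  | zero => exact i.elim0
  | succ n ih =>
    induction i using Fin.cases with
    | zero =>
      have h0 : ∀ x : A, List.ofFn (Function.update D 0 x)
          = x :: List.ofFn (fun j : Fin n => D j.succ) := by
        intro x
        rw [List.ofFn_succ]
        simp [Function.update_apply, Fin.succ_ne_zero]
      rw [h0, h0, List.prod_cons, List.prod_cons, one_mul]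
      have : Commute B (List.ofFn (fun j : Fin n => D j.succ)).prod :=
        Commute.list_prod_right _ _ (by
          intro x hx
          rw [List.mem_ofFn] at hx
          obtain ⟨j, rfl⟩ := hx
          exact hB j.succ)
      exact this.eq.symm
    | succ j =>
      have hs : ∀ x : A, List.ofFn (Function.update D j.succ x)
          = D 0 :: List.ofFn (Function.update (fun k : Fin n => D k.succ) j x) := by
        intro x
        rw [List.ofFn_succ, myupd_succ]
        simp [Function.update_apply, (Fin.succ_ne_zero j).symm]
      rw [hs, hs, List.prod_cons, List.prod_cons, mul_assoc,
        ih (fun k => D k.succ) (fun k => hB k.succ) j]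

end Aux

lemma pderiv_comm' (u v : ℕ × ℕ) (p : R) :
    pderiv u (pderiv v p) = pderiv v (pderiv u p) := by
  induction p using MvPolynomial.induction_on with
  | C a => simp
  | add p q hp hq => simp [hp, hq]
  | mul_X p s hp =>
    simp only [pderiv_mul, map_add, hp]
    by_cases hu : u = s <;> by_cases hv : v = s <;>
      simp [hu, hv, pderiv_X_of_ne, pderiv_X_self, Ne.symm] <;> ring

lemma commute_pderiv (u v : ℕ × ℕ) :
    Commute ((pderiv u).toLinearMap : Module.End ℂ R) (pderiv v).toLinearMap := by
  apply LinearMap.ext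
  intro p
  exact pderiv_comm' u v p

lemma pderiv_mulLeft (u v : ℕ × ℕ) :
    ((pderiv v).toLinearMap : Module.End ℂ R) * LinearMap.mulLeft ℂ (X u)
      = LinearMap.mulLeft ℂ (X u) * (pderiv v).toLinearMap
          + (if v = u then (1:ℂ) else 0) • 1 := by
  apply LinearMap.ext
  intro p
  simp only [Module.End.mul_apply, LinearMap.add_apply, LinearMap.smul_apply,
    Module.End.one_apply, Derivation.coeFn_coe, LinearMap.mulLeft_apply, pderiv_mul]
  by_cases h : v = u
  · subst h
    simp [pderiv_X_self, add_comm]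
  · simp [pderiv_X_of_ne (Ne.symm h), h]


set_option maxHeartbeats 1000000 in
/-- the mirror normal-ordering recursion for `V_N(c|d) ∘ D_N(a,b)`. -/
theorem Vop_comp_Dop (N m : ℕ) (a b : ℕ) (c d : Fin m → ℕ) :
    Vop N c d ∘ₗ Dop N a b =
      Vop N (Fin.snoc c a) (Fin.snoc d b) +
        ∑ i : Fin m, (if a = d i then (1:ℂ) else 0) • Vop N c (Function.update d i b) := by
  classical
  -- notation
  set Dfun : (Fin m → Fin N) → Fin m → Module.End ℂ R :=
    fun e i => (pderiv ((d i, (e i : ℕ)) : ℕ × ℕ)).toLinearMap with hDfun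
  have step1 : ∀ (e : Fin m → Fin N) (f : ℕ),
      (LinearMap.mulLeft ℂ (∏ i, X (c i, (e i : ℕ))) * (List.ofFn (Dfun e)).prod)
        * (LinearMap.mulLeft ℂ (X ((a, f) : ℕ × ℕ)) * (pderiv ((b, f) : ℕ × ℕ)).toLinearMap)
      = LinearMap.mulLeft ℂ ((∏ i, X (c i, (e i : ℕ))) * X ((a, f) : ℕ × ℕ)) *
          ((List.ofFn (Dfun e)).prod * (pderiv ((b, f) : ℕ × ℕ)).toLinearMap)
        + ∑ i, (if ((d i, (e i : ℕ)) : ℕ × ℕ) = (a, f) then (1:ℂ) else 0) •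
            (LinearMap.mulLeft ℂ (∏ i, X (c i, (e i : ℕ))) *
              ((List.ofFn (Function.update (Dfun e) i 1)).prod
                * (pderiv ((b, f) : ℕ × ℕ)).toLinearMap)) := by
    intro e f
    have hcomm := prod_ofFn_mul (Dfun e) (LinearMap.mulLeft ℂ (X ((a, f) : ℕ × ℕ)))
      (fun i => if ((d i, (e i : ℕ)) : ℕ × ℕ) = (a, f) then (1:ℂ) else 0)
      (fun i => pderiv_mulLeft (a, f) (d i, (e i : ℕ)))
    rw [mul_assoc, ← mul_assoc ((List.ofFn (Dfun e)).prod), hcomm]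
    simp only [LinearMap.mulLeft_mul, Module.End.mul_eq_comp, ← Module.End.mul_eq_comp,
      add_mul, Finset.sum_mul, smul_mul_assoc, mul_add, Finset.mul_sum, mul_smul_comm,
      mul_assoc]
  have expand : Vop N c d ∘ₗ Dop N a b
      = ∑ e : Fin m → Fin N, ∑ f ∈ Finset.range N,
          (LinearMap.mulLeft ℂ (∏ i, X (c i, (e i : ℕ))) * (List.ofFn (Dfun e)).prod)
            * (LinearMap.mulLeft ℂ (X ((a, f) : ℕ × ℕ))
                * (pderiv ((b, f) : ℕ × ℕ)).toLinearMap) := by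
    rw [Vop, Dop, ← Module.End.mul_eq_comp]
    simp only [← Module.End.mul_eq_comp]
    rw [Finset.sum_mul_sum]
  have main_eq : (∑ e : Fin m → Fin N, ∑ f ∈ Finset.range N,
      LinearMap.mulLeft ℂ ((∏ i, X (c i, (e i : ℕ))) * X ((a, f) : ℕ × ℕ)) *
        ((List.ofFn (Dfun e)).prod * (pderiv ((b, f) : ℕ × ℕ)).toLinearMap))
      = Vop N (Fin.snoc c a) (Fin.snoc d b) := by
    rw [Vop]
    have hsum := Equiv.sum_comp (Fin.snocEquiv (fun _ : Fin (m+1) => Fin N))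
      (fun E : Fin (m+1) → Fin N =>
        LinearMap.mulLeft ℂ (∏ i : Fin (m+1), X ((Fin.snoc c a : Fin (m+1) → ℕ) i, (E i : ℕ))) ∘ₗ
          (List.ofFn fun i : Fin (m+1) =>
            (pderiv (((Fin.snoc d b : Fin (m+1) → ℕ) i, (E i : ℕ)) : ℕ × ℕ)).toLinearMap).prod)
    rw [← hsum]
    rw [Fintype.sum_prod_type]
    conv_rhs => rw [Finset.sum_comm]
    refine Finset.sum_congr rfl fun e _ => ?_
    rw [← Fin.sum_univ_eq_sum_range (fun f => LinearMap.mulLeft ℂ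
        ((∏ i, X (c i, (e i : ℕ))) * X ((a, f) : ℕ × ℕ)) *
        ((List.ofFn (Dfun e)).prod * (pderiv ((b, f) : ℕ × ℕ)).toLinearMap)) N]
    refine Finset.sum_congr rfl fun fN _ => ?_
    rw [← Module.End.mul_eq_comp]
    congr 1
    · congr 1
      rw [Fin.prod_univ_castSucc]
      simp [Fin.snocEquiv]
    · rw [List.ofFn_succ', List.prod_concat]
      refine congrArg₂ (· * ·) ?_ ?_
      · refine congrArg List.prod (congrArg List.ofFn (funext fun i => ?_))
        simp [Fin.snocEquiv, hDfun]
      · simp [Fin.snocEquiv]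
  have hC : ∀ (e : Fin m → Fin N) (i : Fin m),
      (List.ofFn (Function.update (Dfun e) i 1)).prod
          * (pderiv ((b, (e i : ℕ)) : ℕ × ℕ)).toLinearMap
        = (List.ofFn fun j =>
            (pderiv (((Function.update d i b) j, (e j : ℕ)) : ℕ × ℕ)).toLinearMap).prod := by
    intro e i
    rw [prod_ofFn_update_mul (Dfun e) _ (fun j => commute_pderiv _ _) i]
    congr 1
    congr 1
    funext j
    by_cases h : j = i
    · subst h
      simp [hDfun]
    · simp [hDfun, Function.update_of_ne h]
  have corr_eq : (∑ e : Fin m → Fin N, ∑ f ∈ Finset.range N,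
        ∑ i, (if ((d i, (e i : ℕ)) : ℕ × ℕ) = (a, f) then (1:ℂ) else 0) •
            (LinearMap.mulLeft ℂ (∏ i, X (c i, (e i : ℕ))) *
              ((List.ofFn (Function.update (Dfun e) i 1)).prod
                * (pderiv ((b, f) : ℕ × ℕ)).toLinearMap)))
      = ∑ i : Fin m, (if a = d i then (1:ℂ) else 0) • Vop N c (Function.update d i b) := by
    have hf : ∀ (e : Fin m → Fin N) (i : Fin m),
        (∑ f ∈ Finset.range N,
          (if ((d i, (e i : ℕ)) : ℕ × ℕ) = (a, f) then (1:ℂ) else 0) •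
            (LinearMap.mulLeft ℂ (∏ i, X (c i, (e i : ℕ))) *
              ((List.ofFn (Function.update (Dfun e) i 1)).prod
                * (pderiv ((b, f) : ℕ × ℕ)).toLinearMap)))
        = (if a = d i then (1:ℂ) else 0) •
            (LinearMap.mulLeft ℂ (∏ i, X (c i, (e i : ℕ))) *
              (List.ofFn fun j =>
                (pderiv (((Function.update d i b) j, (e j : ℕ)) : ℕ × ℕ)).toLinearMap).prod) := by
      intro e i
      rw [Finset.sum_eq_single ((e i : ℕ))]
      · rw [hC e i]
        congr 1
        simp only [Prod.mk.injEq, and_true]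
        exact if_congr ⟨fun h => h.symm, fun h => h.symm⟩ rfl rfl
      · intro f _ hne
        have : ¬ (((d i, (e i : ℕ)) : ℕ × ℕ) = (a, f)) := by
          intro h
          exact hne (congrArg Prod.snd h).symm
        simp [this]
      · intro h
        exact absurd (Finset.mem_range.mpr (e i).isLt) h
    calc (∑ e : Fin m → Fin N, ∑ f ∈ Finset.range N, ∑ i,
            (if ((d i, (e i : ℕ)) : ℕ × ℕ) = (a, f) then (1:ℂ) else 0) •
            (LinearMap.mulLeft ℂ (∏ i, X (c i, (e i : ℕ))) *
              ((List.ofFn (Function.update (Dfun e) i 1)).prod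
                * (pderiv ((b, f) : ℕ × ℕ)).toLinearMap)))
        = ∑ e : Fin m → Fin N, ∑ i, ∑ f ∈ Finset.range N,
            (if ((d i, (e i : ℕ)) : ℕ × ℕ) = (a, f) then (1:ℂ) else 0) •
            (LinearMap.mulLeft ℂ (∏ i, X (c i, (e i : ℕ))) *
              ((List.ofFn (Function.update (Dfun e) i 1)).prod
                * (pderiv ((b, f) : ℕ × ℕ)).toLinearMap)) := by
          exact Finset.sum_congr rfl fun e _ => Finset.sum_comm
      _ = ∑ e : Fin m → Fin N, ∑ i : Fin m, (if a = d i then (1:ℂ) else 0) •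
            (LinearMap.mulLeft ℂ (∏ i, X (c i, (e i : ℕ))) *
              (List.ofFn fun j =>
                (pderiv (((Function.update d i b) j, (e j : ℕ)) : ℕ × ℕ)).toLinearMap).prod) := by
          exact Finset.sum_congr rfl fun e _ => Finset.sum_congr rfl fun i _ => hf e i
      _ = ∑ i : Fin m, (if a = d i then (1:ℂ) else 0) • Vop N c (Function.update d i b) := by
          refine Finset.sum_comm.trans (Finset.sum_congr rfl fun i _ => ?_)
          rw [Vop, Finset.smul_sum]
          exact Finset.sum_congr rfl fun e _ => by rw [← Module.End.mul_eq_comp]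
  rw [expand]
  have split : ∀ e : Fin m → Fin N,
      (∑ f ∈ Finset.range N,
        (LinearMap.mulLeft ℂ (∏ i, X (c i, (e i : ℕ))) * (List.ofFn (Dfun e)).prod)
          * (LinearMap.mulLeft ℂ (X ((a, f) : ℕ × ℕ))
              * (pderiv ((b, f) : ℕ × ℕ)).toLinearMap))
      = (∑ f ∈ Finset.range N,
          LinearMap.mulLeft ℂ ((∏ i, X (c i, (e i : ℕ))) * X ((a, f) : ℕ × ℕ)) *
            ((List.ofFn (Dfun e)).prod * (pderiv ((b, f) : ℕ × ℕ)).toLinearMap))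
        + ∑ f ∈ Finset.range N, ∑ i,
            (if ((d i, (e i : ℕ)) : ℕ × ℕ) = (a, f) then (1:ℂ) else 0) •
            (LinearMap.mulLeft ℂ (∏ i, X (c i, (e i : ℕ))) *
              ((List.ofFn (Function.update (Dfun e) i 1)).prod
                * (pderiv ((b, f) : ℕ × ℕ)).toLinearMap)) := by
    intro e
    rw [← Finset.sum_add_distrib]
    exact Finset.sum_congr rfl fun f _ => step1 e f
  simp only [split]
  rw [Finset.sum_add_distrib, main_eq, corr_eq]
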